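/- Let ∇ be a connection on an algebra bundle which acts as a derivation on sections (∇(fg) = ∇(f)g + f∇(g)), let Ω be an End-valued 2-form acting as a multiplier with ∇²(a) = [Ω, a] for all sections a, and suppose ∇(Ω) = −c for a scalar 3-form c. Then for the degree-zero Chern-type map Ch_0(a) = tr(a e^{−Ωu}) one has d(Ch_0(a)) = Ch_0'(∇a) + uc·tr-correction, specifically d tr(a e^{−Ωu}) = tr(∇(a) e^{−Ωu}) + uc·tr(a e^{−Ωu}). -/

import Mathlib

/-- Abstract model of the Chern–Weil computation in the paper:  `R` models the graded
algebra of (even) scalar forms `Ω^•(X)((u))`, `A` models `Ω^•(X, L¹(P))` (with the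
multiplier `σ(Ω)` adjoined), `∇` is a connection acting as a derivation, `d` the
de Rham differential on scalars, `tr` the fibrewise trace with `tr ∘ ∇ = d ∘ tr`,
`Ω` the (nilpotent, even) curvature multiplier with `∇(Ω) = −c·1` for a scalar
`3`-form `c`, and `u` a constant scalar.  Then with
`E = e^{−Ωu} = Σ_{i≤n} (−u·Ω)ⁱ/i!` and `Ch₀(a) = tr(a e^{−Ωu})` one has
`d tr(a e^{−Ωu}) = tr(∇(a) e^{−Ωu}) + u c · tr(a e^{−Ωu})`. -/
theorem dCh_zero_formula
    (R : Type) [CommRing R] [Algebra ℂ R]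
    (A : Type) [Ring A] [Algebra ℂ A] [Algebra R A] [IsScalarTower ℂ R A]
    (d : R →ₗ[ℂ] R) (del : A →ₗ[ℂ] A) (tr : A →ₗ[ℂ] R)
    (Ω : A) (u c : R) (n : ℕ)
    -- `∇` is a derivation (on the even elements under consideration):
    (hLeib : ∀ x y : A, del (x * y) = del x * y + x * del y)
    -- `∇` differentiates scalars by `d`:
    (hsmul : ∀ (r : R) (x : A), del (r • x) = d r • x + r • del x)
    -- `∇(σ(Ω)) = −c`:
    (hΩ : del Ω = -(c • (1 : A)))
    -- the curvature `2`-form is nilpotent (`Ω^n = 0` as `2n > dim X`):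
    (hΩn : Ω ^ n = 0)
    -- `u` is a constant:
    (hu : d u = 0)
    -- the trace is closed: `tr(∇ s) = d tr(s)`:
    (htrd : ∀ x : A, tr (del x) = d (tr x))
    -- the trace is `Ω^•(X)((u))`-linear:
    (htrR : ∀ (r : R) (x : A), tr (r • x) = r * tr x) :
    ∀ a : A,
      d (tr (a * ∑ i ∈ Finset.range (n + 1), ((i.factorial : ℂ))⁻¹ • (((-u) • Ω) ^ i))) =
        tr (del a * ∑ i ∈ Finset.range (n + 1), ((i.factorial : ℂ))⁻¹ • (((-u) • Ω) ^ i))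
          + (u * c) *
            tr (a * ∑ i ∈ Finset.range (n + 1), ((i.factorial : ℂ))⁻¹ • (((-u) • Ω) ^ i)) := by

  intro a
  haveI : SMulCommClass ℂ R A :=
    ⟨fun z r b => by
      rw [Algebra.smul_def r, Algebra.smul_def (A := A) z, Algebra.smul_def (A := A) z,
        Algebra.smul_def r, ← mul_assoc, ← mul_assoc, Algebra.commutes]⟩
  set x : A := (-u) • Ω with hx
  set E : A := ∑ i ∈ Finset.range (n + 1), ((i.factorial : ℂ))⁻¹ • x ^ i with hE
  have hdel1 : del (1 : A) = 0 := by
    have h := hLeib 1 1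
    simp only [one_mul, mul_one] at h
    exact (right_eq_add.mp h)
  have hdx : del x = (u * c) • (1 : A) := by
    rw [hx, hsmul, map_neg, hu, neg_zero, zero_smul, zero_add, hΩ, smul_neg, neg_smul, neg_neg,
      smul_smul]
  have hpow : ∀ k : ℕ, del (x ^ (k + 1)) = (k + 1 : ℕ) • ((u * c) • x ^ k) := by
    intro k
    induction k with
    | zero => simpa using hdx
    | succ m ih =>
        rw [pow_succ' x (m + 1), hLeib, ih, hdx, smul_mul_assoc, one_mul, mul_smul_comm,
          mul_smul_comm, ← pow_succ' x m]
        rw [succ_nsmul ((u * c) • x ^ (m + 1)) (m + 1)]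
        abel
  have hxn : x ^ n = 0 := by
    rw [hx, smul_pow, hΩn, smul_zero]
  have hdE : del E = (u * c) • E := by
    rw [hE, map_sum]
    rw [Finset.sum_range_succ' (fun i => del (((i.factorial : ℂ))⁻¹ • x ^ i))]
    simp only [map_smul, hpow, Nat.factorial_zero, pow_zero, hdel1, smul_zero, add_zero]
    rw [Finset.smul_sum, Finset.sum_range_succ, smul_comm, hxn, smul_zero, smul_zero, add_zero]
    refine Finset.sum_congr rfl fun k _ => ?_
    have hk : ((k.factorial : ℂ)) ≠ 0 := Nat.cast_ne_zero.mpr k.factorial_ne_zero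
    have hk1 : (((k + 1 : ℕ)) : ℂ) ≠ 0 := Nat.cast_ne_zero.mpr (Nat.succ_ne_zero k)
    have hfac : (((k + 1).factorial : ℂ))⁻¹ * (((k + 1 : ℕ)) : ℂ) = ((k.factorial : ℂ))⁻¹ := by
      rw [Nat.factorial_succ, Nat.cast_mul, mul_inv, mul_comm (((k + 1 : ℕ) : ℂ))⁻¹, mul_assoc,
        inv_mul_cancel₀ hk1, mul_one]
    rw [← Nat.cast_smul_eq_nsmul ℂ (k + 1), smul_smul, smul_comm, hfac]
  calc d (tr (a * E)) = tr (del (a * E)) := (htrd _).symm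
    _ = tr (del a * E) + tr (a * del E) := by rw [hLeib, map_add]
    _ = tr (del a * E) + (u * c) * tr (a * E) := by
        rw [hdE, mul_smul_comm, htrR]
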